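/- arXiv:1902.03736 — 3 statements merged into one kernel-verified Lean document; each statement's English description precedes it below -/
import Mathlib

section
/- If a random vector X in ℝ^d is (σ/√d)-subGaussian, i.e. E exp(⟨v, X − E X⟩) ≤ exp(‖v‖² σ²/(2d)) for all v ∈ ℝ^d, then X is norm-subGaussian with parameter 2√2·σ, i.e. Pr(‖X − E X‖ ≥ t) ≤ 2 exp(−t²/(16σ²)) for all t ≥ 0. -/
open MeasureTheory ProbabilityTheory Real
open scoped RealInnerProductSpace

open Set in
lemma aux_integral_Ioi (c : ℝ) (hc : 0 < c) :
    ∫ x in Ioi (0:ℝ), x * exp (-c * x ^ 2) = (2 * c)⁻¹ := by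
  have hderiv : ∀ x ∈ Ioi (0:ℝ),
      HasDerivAt (fun y : ℝ => -(2 * c)⁻¹ * exp (-c * y ^ 2)) (x * exp (-c * x ^ 2)) x := by
    intro x _
    have h1 : HasDerivAt (fun y : ℝ => -c * y ^ 2) (-c * (2 * x)) x := by
      simpa using ((hasDerivAt_pow 2 x).const_mul (-c))
    have h2 := (h1.exp).const_mul (-(2 * c)⁻¹)
    refine h2.congr_deriv ?_
    have hcc : (2 * c)⁻¹ * (2 * c) = 1 := inv_mul_cancel₀ (by positivity)
    linear_combination (x * exp (-c * x ^ 2)) * hcc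
  have hcont : ContinuousOn (fun y : ℝ => -(2 * c)⁻¹ * exp (-c * y ^ 2)) (Ici 0) :=
    (continuous_const.mul ((continuous_const.mul (continuous_pow 2)).rexp)).continuousOn
  have hint : IntegrableOn (fun x : ℝ => x * exp (-c * x ^ 2)) (Ioi 0) :=
    (integrable_mul_exp_neg_mul_sq hc).integrableOn
  have htend : Filter.Tendsto (fun y : ℝ => -(2 * c)⁻¹ * exp (-c * y ^ 2))
      Filter.atTop (nhds 0) := by
    have h2 : Filter.Tendsto (fun y : ℝ => -c * y ^ 2) Filter.atTop Filter.atBot :=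
      (Filter.tendsto_pow_atTop (by norm_num)).const_mul_atTop_of_neg (by linarith)
    have h3 := Real.tendsto_exp_atBot.comp h2
    simpa using h3.const_mul (-(2 * c)⁻¹)
  have := integral_Ioi_of_hasDerivAt_of_tendsto
    (hcont.continuousWithinAt (by simp)) hderiv hint htend
  rw [this]; simp

set_option maxHeartbeats 1000000 in
/-- If a random vector `X` in `ℝ^d` is `(σ/√d)`-subGaussian, i.e.
`E exp(⟨v, X − E X⟩) ≤ exp(‖v‖² σ²/(2d))` for all `v ∈ ℝ^d`, then `X` is norm-subGaussian
with parameter `2√2·σ`, i.e. `Pr(‖X − E X‖ ≥ t) ≤ 2 exp(−t²/(16σ²))` for all `t ≥ 0`. -/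
theorem subGaussian_is_norm_subGaussian
    (d : ℕ) (Ω : Type) [MeasureSpace Ω] [IsProbabilityMeasure (ℙ : Measure Ω)]
    (X : Ω → EuclideanSpace ℝ (Fin d)) (σ : ℝ) (hσ : 0 < σ)
    (hXmeas : Measurable X) (hXint : Integrable X)
    (hmgf_int : ∀ v : EuclideanSpace ℝ (Fin d),
      Integrable (fun ω => Real.exp ⟪v, X ω - ∫ x, X x⟫))
    (hmgf : ∀ v : EuclideanSpace ℝ (Fin d),
      (∫ ω, Real.exp ⟪v, X ω - ∫ x, X x⟫) ≤ Real.exp (‖v‖ ^ 2 * σ ^ 2 / (2 * d))) :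
    ∀ t : ℝ, 0 ≤ t →
      ℙ {ω | t ≤ ‖X ω - ∫ x, X x‖} ≤
        ENNReal.ofReal (2 * Real.exp (-t ^ 2 / (16 * σ ^ 2))) := by
  intro t ht
  set m : EuclideanSpace ℝ (Fin d) := ∫ x, X x with hm
  set Y : Ω → EuclideanSpace ℝ (Fin d) := fun ω => X ω - m with hYdef
  have hσ2 : (0:ℝ) < σ ^ 2 := by positivity
  have hYmeas : Measurable Y := hXmeas.sub measurable_const
  -- trivial case
  by_cases htriv : 1 ≤ ENNReal.ofReal (2 * Real.exp (-t ^ 2 / (16 * σ ^ 2)))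
  · exact le_trans prob_le_one htriv
  -- nontrivial case: t^2 > 16 σ² log 2
  have ht2 : 16 * σ ^ 2 * Real.log 2 < t ^ 2 := by
    rw [not_le, ENNReal.ofReal_lt_one] at htriv
    have h1 : Real.exp (-t ^ 2 / (16 * σ ^ 2)) < Real.exp (Real.log 2⁻¹) := by
      rw [Real.exp_log (by norm_num)]; linarith
    have h2 := Real.exp_lt_exp.mp h1
    rw [Real.log_inv] at h2
    have h3 : Real.log 2 < t ^ 2 / (16 * σ ^ 2) := by
      have : -t ^ 2 / (16 * σ ^ 2) = -(t ^ 2 / (16 * σ ^ 2)) := by ring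
      rw [this] at h2; linarith
    have h4 := (lt_div_iff₀ (by positivity : (0:ℝ) < 16 * σ ^ 2)).mp h3
    linarith
  have htpos : 0 < t := by
    rcases ht.lt_or_eq with h | h
    · exact h
    · exfalso; rw [← h] at ht2; nlinarith [Real.log_pos (by norm_num : (1:ℝ) < 2)]
  -- dimension 0 case
  rcases Nat.eq_zero_or_pos d with hd0 | hdpos
  · subst hd0
    have hzero : ∀ ω, ‖Y ω‖ = 0 := by
      intro ω
      rw [EuclideanSpace.norm_eq]
      simp
    have : {ω | t ≤ ‖X ω - m‖} = (∅ : Set Ω) := by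
      ext ω
      simp only [Set.mem_setOf_eq, Set.mem_empty_iff_false, iff_false, not_le]
      calc ‖X ω - m‖ = ‖Y ω‖ := rfl
        _ = 0 := hzero ω
        _ < t := htpos
    rw [this]
    simp
  have hd : (0:ℝ) < d := by exact_mod_cast hdpos
  -- Chernoff bound in each direction
  have chernoff : ∀ v : EuclideanSpace ℝ (Fin d), ‖v‖ = 1 → ∀ a : ℝ, 0 < a →
      ℙ {ω | a ≤ ⟪v, Y ω⟫} ≤ ENNReal.ofReal (Real.exp (-(a ^ 2) * d / (2 * σ ^ 2))) := by
    intro v hv a ha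
    set lam : ℝ := a * d / σ ^ 2 with hlam
    have hlampos : 0 < lam := by positivity
    have hinner_meas : Measurable fun ω => ⟪lam • v, Y ω⟫ := measurable_const.inner hYmeas
    have hmeas : AEMeasurable (fun ω => ENNReal.ofReal (Real.exp ⟪lam • v, Y ω⟫)) ℙ :=
      (ENNReal.measurable_ofReal.comp (Real.measurable_exp.comp hinner_meas)).aemeasurable
    have key := mul_meas_ge_le_lintegral₀ hmeas (ENNReal.ofReal (Real.exp (lam * a)))
    have hsub : {ω | a ≤ ⟪v, Y ω⟫} ⊆
        {ω | ENNReal.ofReal (Real.exp (lam * a)) ≤ ENNReal.ofReal (Real.exp ⟪lam • v, Y ω⟫)} := by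
      intro ω hω
      apply ENNReal.ofReal_le_ofReal
      apply Real.exp_le_exp.mpr
      rw [real_inner_smul_left]
      exact mul_le_mul_of_nonneg_left hω hlampos.le
    have hlint : ∫⁻ ω, ENNReal.ofReal (Real.exp ⟪lam • v, Y ω⟫) =
        ENNReal.ofReal (∫ ω, Real.exp ⟪lam • v, Y ω⟫) :=
      (ofReal_integral_eq_lintegral_ofReal (hmgf_int (lam • v))
        (Filter.Eventually.of_forall fun ω => (Real.exp_pos _).le)).symm
    have hbound : (∫ ω, Real.exp ⟪lam • v, Y ω⟫) ≤ Real.exp (lam ^ 2 * σ ^ 2 / (2 * d)) := by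
      have h := hmgf (lam • v)
      have hn : ‖lam • v‖ ^ 2 = lam ^ 2 := by
        rw [norm_smul, hv]; simp [abs_of_pos hlampos]
      rwa [hn] at h
    have key2 : ENNReal.ofReal (Real.exp (lam * a)) * ℙ {ω | ENNReal.ofReal (Real.exp (lam * a))
        ≤ ENNReal.ofReal (Real.exp ⟪lam • v, Y ω⟫)} ≤
        ENNReal.ofReal (Real.exp (lam ^ 2 * σ ^ 2 / (2 * d))) := by
      refine key.trans ?_
      rw [hlint]
      exact ENNReal.ofReal_le_ofReal hbound
    have hexp_eq : -(lam * a) + lam ^ 2 * σ ^ 2 / (2 * d) = -(a ^ 2) * d / (2 * σ ^ 2) := by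
      rw [hlam]
      field_simp
      ring
    calc ℙ {ω | a ≤ ⟪v, Y ω⟫}
        ≤ ℙ {ω | ENNReal.ofReal (Real.exp (lam * a)) ≤
            ENNReal.ofReal (Real.exp ⟪lam • v, Y ω⟫)} := measure_mono hsub
      _ = ENNReal.ofReal (Real.exp (-(lam * a))) * (ENNReal.ofReal (Real.exp (lam * a)) *
            ℙ {ω | ENNReal.ofReal (Real.exp (lam * a)) ≤
              ENNReal.ofReal (Real.exp ⟪lam • v, Y ω⟫)}) := by
          rw [← mul_assoc, ← ENNReal.ofReal_mul (Real.exp_pos _).le, ← Real.exp_add]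
          simp
      _ ≤ ENNReal.ofReal (Real.exp (-(lam * a))) *
            ENNReal.ofReal (Real.exp (lam ^ 2 * σ ^ 2 / (2 * d))) := mul_le_mul_right key2 _
      _ = ENNReal.ofReal (Real.exp (-(a ^ 2) * d / (2 * σ ^ 2))) := by
          rw [← ENNReal.ofReal_mul (Real.exp_pos _).le, ← Real.exp_add, hexp_eq]
  -- coordinate vectors
  set e : Fin d → EuclideanSpace ℝ (Fin d) := fun i => EuclideanSpace.single i (1:ℝ) with he
  have he_norm : ∀ i, ‖e i‖ = 1 := by
    intro i; rw [he]; simp [EuclideanSpace.norm_single]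
  -- two-sided coordinate tail
  have tail2 : ∀ (i : Fin d) (a : ℝ), 0 < a →
      ℙ {ω | a ≤ |⟪e i, Y ω⟫|} ≤ ENNReal.ofReal (2 * Real.exp (-(a ^ 2) * d / (2 * σ ^ 2))) := by
    intro i a ha
    have h1 := chernoff (e i) (he_norm i) a ha
    have h2 := chernoff (-(e i)) (by rw [norm_neg]; exact he_norm i) a ha
    have hsub : {ω | a ≤ |⟪e i, Y ω⟫|} ⊆
        {ω | a ≤ ⟪e i, Y ω⟫} ∪ {ω | a ≤ ⟪-(e i), Y ω⟫} := by
      intro ω hω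
      rcases le_abs.mp (show a ≤ |⟪e i, Y ω⟫| from hω) with h | h
      · exact Or.inl h
      · refine Or.inr ?_
        show a ≤ ⟪-(e i), Y ω⟫
        rw [inner_neg_left]
        exact h
    calc ℙ {ω | a ≤ |⟪e i, Y ω⟫|}
        ≤ ℙ ({ω | a ≤ ⟪e i, Y ω⟫} ∪ {ω | a ≤ ⟪-(e i), Y ω⟫}) := measure_mono hsub
      _ ≤ ℙ {ω | a ≤ ⟪e i, Y ω⟫} + ℙ {ω | a ≤ ⟪-(e i), Y ω⟫} := measure_union_le _ _
      _ ≤ ENNReal.ofReal (Real.exp (-(a ^ 2) * d / (2 * σ ^ 2))) +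
            ENNReal.ofReal (Real.exp (-(a ^ 2) * d / (2 * σ ^ 2))) := add_le_add h1 h2
      _ = ENNReal.ofReal (2 * Real.exp (-(a ^ 2) * d / (2 * σ ^ 2))) := by
          rw [← ENNReal.ofReal_add (Real.exp_pos _).le (Real.exp_pos _).le]
          ring_nf
  -- exponential square moment of each coordinate
  set b : ℝ := 3 * d / (8 * σ ^ 2) with hb
  have hbpos : 0 < b := by positivity
  have coord : ∀ i : Fin d,
      ∫⁻ ω, ENNReal.ofReal (Real.exp (b * ⟪e i, Y ω⟫ ^ 2)) ≤ 7 := by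
    intro i
    set c : ℝ := d / (8 * σ ^ 2) with hc
    have hcpos : 0 < c := by positivity
    set f : Ω → ℝ := fun ω => |⟪e i, Y ω⟫| with hf
    set g : ℝ → ℝ := fun u => 2 * b * u * Real.exp (b * u ^ 2) with hg
    have hg_cont : Continuous g := by
      exact (continuous_const.mul continuous_id).mul
        ((continuous_const.mul (continuous_pow 2)).rexp)
    have hFTC : ∀ z : ℝ, ∫ u in (0:ℝ)..(|z|), g u = Real.exp (b * z ^ 2) - 1 := by
      intro z
      have hderiv : ∀ u ∈ Set.uIcc (0:ℝ) |z|,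
          HasDerivAt (fun y => Real.exp (b * y ^ 2)) (g u) u := by
        intro u _
        have h1 : HasDerivAt (fun y : ℝ => b * y ^ 2) (b * (2 * u)) u := by
          simpa using ((hasDerivAt_pow 2 u).const_mul b)
        have h2 := h1.exp
        convert h2 using 1
        rw [hg]
        ring
      have := intervalIntegral.integral_eq_sub_of_hasDerivAt hderiv
        (hg_cont.intervalIntegrable 0 |z|)
      rw [this, sq_abs]
      simp
    have pointwise : ∀ ω, ENNReal.ofReal (Real.exp (b * ⟪e i, Y ω⟫ ^ 2)) =
        1 + ENNReal.ofReal (∫ u in (0:ℝ)..(f ω), g u) := by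
      intro ω
      rw [hf]
      simp only []
      rw [hFTC ⟪e i, Y ω⟫]
      have h1 : (0:ℝ) ≤ Real.exp (b * ⟪e i, Y ω⟫ ^ 2) - 1 := by
        have := Real.one_le_exp (by positivity : (0:ℝ) ≤ b * ⟪e i, Y ω⟫ ^ 2)
        linarith
      calc ENNReal.ofReal (Real.exp (b * ⟪e i, Y ω⟫ ^ 2))
          = ENNReal.ofReal (1 + (Real.exp (b * ⟪e i, Y ω⟫ ^ 2) - 1)) := by ring_nf
        _ = ENNReal.ofReal 1 + ENNReal.ofReal (Real.exp (b * ⟪e i, Y ω⟫ ^ 2) - 1) :=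
            ENNReal.ofReal_add zero_le_one h1
        _ = 1 + ENNReal.ofReal (Real.exp (b * ⟪e i, Y ω⟫ ^ 2) - 1) := by
            rw [ENNReal.ofReal_one]
    have layercake := lintegral_comp_eq_lintegral_meas_le_mul (ℙ : Measure Ω)
      (f := f) (g := g)
      (Filter.Eventually.of_forall fun ω => abs_nonneg _)
      ((measurable_const.inner hYmeas).abs).aemeasurable
      (fun u _ => hg_cont.intervalIntegrable 0 u)
      (by
        filter_upwards [ae_restrict_mem measurableSet_Ioi] with u hu
        have hu' : (0:ℝ) < u := hu
        rw [hg]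
        positivity)
    have tailbound : ∫⁻ u in Set.Ioi (0:ℝ), ℙ {a | u ≤ f a} * ENNReal.ofReal (g u) ≤
        ∫⁻ u in Set.Ioi (0:ℝ), ENNReal.ofReal (4 * b * (u * Real.exp (-c * u ^ 2))) := by
      apply setLIntegral_mono
      · exact ENNReal.measurable_ofReal.comp (by fun_prop)
      · intro u hu
        have hu' : (0:ℝ) < u := hu
        have h1 : ℙ {a | u ≤ f a} ≤ ENNReal.ofReal (2 * Real.exp (-(u ^ 2) * d / (2 * σ ^ 2))) :=
          tail2 i u hu'
        calc ℙ {a | u ≤ f a} * ENNReal.ofReal (g u)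
            ≤ ENNReal.ofReal (2 * Real.exp (-(u ^ 2) * d / (2 * σ ^ 2))) *
              ENNReal.ofReal (g u) := mul_le_mul_left h1 _
          _ = ENNReal.ofReal (2 * Real.exp (-(u ^ 2) * d / (2 * σ ^ 2)) * g u) :=
              (ENNReal.ofReal_mul (by positivity)).symm
          _ = ENNReal.ofReal (4 * b * (u * Real.exp (-c * u ^ 2))) := by
              congr 1
              rw [hg]
              have hexp : Real.exp (-(u ^ 2) * d / (2 * σ ^ 2)) * Real.exp (b * u ^ 2) =
                  Real.exp (-c * u ^ 2) := by
                rw [← Real.exp_add]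
                congr 1
                rw [hb, hc]
                field_simp
                ring
              calc 2 * Real.exp (-(u ^ 2) * d / (2 * σ ^ 2)) * (2 * b * u * Real.exp (b * u ^ 2))
                  = 4 * b * (u * (Real.exp (-(u ^ 2) * d / (2 * σ ^ 2)) *
                      Real.exp (b * u ^ 2))) := by ring
                _ = 4 * b * (u * Real.exp (-c * u ^ 2)) := by rw [hexp]
    have hint : IntegrableOn (fun u : ℝ => 4 * b * (u * Real.exp (-c * u ^ 2)))
        (Set.Ioi (0:ℝ)) := ((integrable_mul_exp_neg_mul_sq hcpos).integrableOn).const_mul _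
    have hval : ∫⁻ u in Set.Ioi (0:ℝ),
        ENNReal.ofReal (4 * b * (u * Real.exp (-c * u ^ 2))) = ENNReal.ofReal 6 := by
      rw [← ofReal_integral_eq_lintegral_ofReal hint
        (by
          filter_upwards [ae_restrict_mem measurableSet_Ioi] with u hu
          have hu' : (0:ℝ) < u := hu
          positivity)]
      congr 1
      rw [integral_const_mul, aux_integral_Ioi c hcpos]
      rw [hb, hc]
      field_simp
      ring
    calc ∫⁻ ω, ENNReal.ofReal (Real.exp (b * ⟪e i, Y ω⟫ ^ 2))
        = ∫⁻ ω, (1 + ENNReal.ofReal (∫ u in (0:ℝ)..(f ω), g u)) :=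
          lintegral_congr pointwise
      _ = 1 * ℙ Set.univ + ∫⁻ ω, ENNReal.ofReal (∫ u in (0:ℝ)..(f ω), g u) := by
          rw [lintegral_add_left measurable_const, lintegral_const]
      _ = 1 + ∫⁻ u in Set.Ioi (0:ℝ), ℙ {a | u ≤ f a} * ENNReal.ofReal (g u) := by
          rw [measure_univ, mul_one, layercake]
      _ ≤ 1 + ENNReal.ofReal 6 :=
          add_le_add_right (tailbound.trans hval.le) 1
      _ ≤ 7 := by
          have h6 : ENNReal.ofReal 6 = ((6:ℕ) : ENNReal) := by
            rw [show ((6:ℝ)) = ((6:ℕ):ℝ) by norm_num, ENNReal.ofReal_natCast]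
          rw [h6]
          norm_num
  -- Hölder
  set s : ℝ := 3 / (8 * σ ^ 2) with hs
  have hspos : 0 < s := by positivity
  have hoelder : ∫⁻ ω, ENNReal.ofReal (Real.exp (s * ‖Y ω‖ ^ 2)) ≤ 7 := by
    have hd0 : (d:ℝ) ≠ 0 := ne_of_gt hd
    have pointwise : ∀ ω, ENNReal.ofReal (Real.exp (s * ‖Y ω‖ ^ 2)) =
        ∏ i : Fin d, (ENNReal.ofReal (Real.exp (b * ⟪e i, Y ω⟫ ^ 2))) ^ ((1:ℝ)/d) := by
      intro ω
      have hnorm : ‖Y ω‖ ^ 2 = ∑ i : Fin d, ⟪e i, Y ω⟫ ^ 2 := by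
        rw [EuclideanSpace.norm_eq, Real.sq_sqrt (by positivity)]
        apply Finset.sum_congr rfl
        intro i _
        rw [he]
        simp [EuclideanSpace.inner_single_left, Real.norm_eq_abs, sq_abs]
      have hsplit : Real.exp (s * ‖Y ω‖ ^ 2) =
          ∏ i : Fin d, Real.exp (b * ⟪e i, Y ω⟫ ^ 2) ^ ((1:ℝ)/d) := by
        rw [hnorm, Finset.mul_sum, Real.exp_sum]
        apply Finset.prod_congr rfl
        intro i _
        rw [← Real.exp_mul]
        congr 1
        rw [hs, hb]
        field_simp
      rw [hsplit, ENNReal.ofReal_prod_of_nonneg (fun i _ => by positivity)]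
      apply Finset.prod_congr rfl
      intro i _
      rw [ENNReal.ofReal_rpow_of_pos (Real.exp_pos _)]
    have hmeas : ∀ i ∈ Finset.univ, AEMeasurable
        (fun ω => ENNReal.ofReal (Real.exp (b * ⟪e i, Y ω⟫ ^ 2))) ℙ := by
      intro i _
      have h1 : Measurable fun ω => ⟪e i, Y ω⟫ := measurable_const.inner hYmeas
      exact (ENNReal.measurable_ofReal.comp
        (Real.measurable_exp.comp ((h1.pow_const 2).const_mul b))).aemeasurable
    have hpsum : ∑ _i : Fin d, (1:ℝ)/d = 1 := by
      rw [Finset.sum_const, Finset.card_univ, Fintype.card_fin, nsmul_eq_mul]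
      field_simp
    calc ∫⁻ ω, ENNReal.ofReal (Real.exp (s * ‖Y ω‖ ^ 2))
        = ∫⁻ ω, ∏ i : Fin d,
            (ENNReal.ofReal (Real.exp (b * ⟪e i, Y ω⟫ ^ 2))) ^ ((1:ℝ)/d) :=
          lintegral_congr pointwise
      _ ≤ ∏ i : Fin d,
            (∫⁻ ω, ENNReal.ofReal (Real.exp (b * ⟪e i, Y ω⟫ ^ 2))) ^ ((1:ℝ)/d) :=
          ENNReal.lintegral_prod_norm_pow_le Finset.univ hmeas hpsum
            (fun i _ => by positivity)
      _ ≤ ∏ _i : Fin d, (7:ENNReal) ^ ((1:ℝ)/d) :=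
          Finset.prod_le_prod' (fun i _ => ENNReal.rpow_le_rpow (coord i) (by positivity))
      _ = 7 := by
          rw [Finset.prod_const, Finset.card_univ, Fintype.card_fin,
            ← ENNReal.rpow_natCast ((7:ENNReal) ^ ((1:ℝ)/d)) d, ← ENNReal.rpow_mul]
          rw [show (1:ℝ)/d * d = 1 by field_simp]
          exact ENNReal.rpow_one 7
  -- Markov
  have markov : ℙ {ω | t ≤ ‖X ω - m‖} ≤ ENNReal.ofReal (7 * Real.exp (-(s * t ^ 2))) := by
    have hmeas2 : AEMeasurable (fun ω => ENNReal.ofReal (Real.exp (s * ‖Y ω‖ ^ 2))) ℙ :=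
      (ENNReal.measurable_ofReal.comp (Real.measurable_exp.comp
        ((hYmeas.norm.pow_const 2).const_mul s))).aemeasurable
    have key := mul_meas_ge_le_lintegral₀ hmeas2 (ENNReal.ofReal (Real.exp (s * t ^ 2)))
    have hsub : {ω | t ≤ ‖X ω - m‖} ⊆ {ω | ENNReal.ofReal (Real.exp (s * t ^ 2)) ≤
        ENNReal.ofReal (Real.exp (s * ‖Y ω‖ ^ 2))} := by
      intro ω hω
      apply ENNReal.ofReal_le_ofReal
      apply Real.exp_le_exp.mpr
      have h0 : t ≤ ‖Y ω‖ := hω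
      have h1 : t ^ 2 ≤ ‖Y ω‖ ^ 2 := by nlinarith [norm_nonneg (Y ω)]
      nlinarith
    have key2 : ENNReal.ofReal (Real.exp (s * t ^ 2)) *
        ℙ {ω | ENNReal.ofReal (Real.exp (s * t ^ 2)) ≤
          ENNReal.ofReal (Real.exp (s * ‖Y ω‖ ^ 2))} ≤ 7 := key.trans hoelder
    have h7 : (7:ENNReal) = ENNReal.ofReal 7 := by
      rw [show ((7:ℝ)) = ((7:ℕ):ℝ) by norm_num, ENNReal.ofReal_natCast]
      norm_num
    calc ℙ {ω | t ≤ ‖X ω - m‖}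
        ≤ ℙ {ω | ENNReal.ofReal (Real.exp (s * t ^ 2)) ≤
            ENNReal.ofReal (Real.exp (s * ‖Y ω‖ ^ 2))} := measure_mono hsub
      _ = ENNReal.ofReal (Real.exp (-(s * t ^ 2))) * (ENNReal.ofReal (Real.exp (s * t ^ 2)) *
            ℙ {ω | ENNReal.ofReal (Real.exp (s * t ^ 2)) ≤
              ENNReal.ofReal (Real.exp (s * ‖Y ω‖ ^ 2))}) := by
          rw [← mul_assoc, ← ENNReal.ofReal_mul (Real.exp_pos _).le, ← Real.exp_add]
          simp
      _ ≤ ENNReal.ofReal (Real.exp (-(s * t ^ 2))) * 7 := mul_le_mul_right key2 _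
      _ = ENNReal.ofReal (7 * Real.exp (-(s * t ^ 2))) := by
          rw [h7, ← ENNReal.ofReal_mul (Real.exp_pos _).le, mul_comm]
  refine markov.trans (ENNReal.ofReal_le_ofReal ?_)
  -- numeric comparison
  have hA : -(s * t ^ 2) = (-t ^ 2 / (16 * σ ^ 2)) + (-(5 * t ^ 2) / (16 * σ ^ 2)) := by
    rw [hs]
    field_simp
    ring
  rw [hA, Real.exp_add]
  have hC : Real.exp (-(5 * t ^ 2) / (16 * σ ^ 2)) ≤ 2 / 7 := by
    have h1 : -(5 * t ^ 2) / (16 * σ ^ 2) ≤ -(5 * Real.log 2) := by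
      rw [div_le_iff₀ (by positivity : (0:ℝ) < 16 * σ ^ 2)]
      nlinarith
    have h2 : Real.exp (5 * Real.log 2) = 32 := by
      rw [show (5:ℝ) = ((5:ℕ):ℝ) by norm_num, Real.exp_nat_mul, Real.exp_log two_pos]
      norm_num
    calc Real.exp (-(5 * t ^ 2) / (16 * σ ^ 2)) ≤ Real.exp (-(5 * Real.log 2)) :=
          Real.exp_le_exp.mpr h1
      _ = 32⁻¹ := by rw [Real.exp_neg, h2]
      _ ≤ 2 / 7 := by norm_num
  nlinarith [Real.exp_pos (-t ^ 2 / (16 * σ ^ 2)),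
    (Real.exp_pos (-(5 * t ^ 2) / (16 * σ ^ 2))).le]
end

section
/- If a zero-mean random vector X in ℝ^d is (σ/√d)-subGaussian, i.e. E exp(⟨v, X⟩) ≤ exp(‖v‖² σ²/(2d)) for all v ∈ ℝ^d, then for every t ≥ 0 one has Pr(‖X‖ ≥ t) ≤ 4^d · exp(−d t²/(8σ²)). -/
open MeasureTheory ProbabilityTheory Real Metric
open scoped RealInnerProductSpace ENNReal

lemma sep_card_bound (d : ℕ) (S : Finset (EuclideanSpace ℝ (Fin d)))
    (h1 : ∀ v ∈ S, ‖v‖ = 1)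
    (hsep : ∀ v ∈ S, ∀ w ∈ S, v ≠ w → 2/3 < dist v w) : S.card ≤ 4 ^ d := by
  set V : ℝ≥0∞ := volume (ball (0 : EuclideanSpace ℝ (Fin d)) 1) with hV
  have hV0 : 0 < V := measure_ball_pos _ _ one_pos
  have hVtop : V ≠ ⊤ := measure_ball_lt_top.ne
  have hdisj : (S : Set (EuclideanSpace ℝ (Fin d))).PairwiseDisjoint (fun v => ball v (1/3 : ℝ)) := by
    intro v hv w hw hvw
    apply ball_disjoint_ball
    have := hsep v hv w hw hvw
    linarith [this]
  have hsum : ∑ v ∈ S, volume (ball (v : EuclideanSpace ℝ (Fin d)) (1/3 : ℝ)) =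
      volume (⋃ v ∈ S, ball (v : EuclideanSpace ℝ (Fin d)) (1/3 : ℝ)) :=
    (measure_biUnion_finset hdisj (fun v _ => measurableSet_ball)).symm
  have hsub : (⋃ v ∈ S, ball (v : EuclideanSpace ℝ (Fin d)) (1/3 : ℝ)) ⊆ ball (0 : EuclideanSpace ℝ (Fin d)) (4/3 : ℝ) := by
    intro x hx
    simp only [Set.mem_iUnion] at hx
    obtain ⟨v, hv, hx⟩ := hx
    rw [mem_ball] at hx ⊢
    calc dist x 0 ≤ dist x v + dist v 0 := dist_triangle _ _ _
      _ < 1/3 + 1 := by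
          have : dist v 0 = 1 := by rw [dist_zero_right]; exact h1 v hv
          linarith
      _ ≤ 4/3 := by norm_num
  have hball : ∀ v : EuclideanSpace ℝ (Fin d), volume (ball v (1/3 : ℝ)) =
      ENNReal.ofReal ((1/3 : ℝ) ^ d) * V := by
    intro v
    rw [Measure.addHaar_ball_of_pos _ _ (by norm_num : (0:ℝ) < 1/3)]
    rw [finrank_euclideanSpace_fin]
  have hbig : volume (ball (0 : EuclideanSpace ℝ (Fin d)) (4/3 : ℝ)) = ENNReal.ofReal ((4/3 : ℝ) ^ d) * V := by
    rw [Measure.addHaar_ball_of_pos _ _ (by norm_num : (0:ℝ) < 4/3)]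
    rw [finrank_euclideanSpace_fin]
  have key : (S.card : ℝ≥0∞) * (ENNReal.ofReal ((1/3 : ℝ) ^ d) * V) ≤
      ENNReal.ofReal ((4/3 : ℝ) ^ d) * V := by
    calc (S.card : ℝ≥0∞) * (ENNReal.ofReal ((1/3 : ℝ) ^ d) * V)
        = ∑ v ∈ S, volume (ball (v : EuclideanSpace ℝ (Fin d)) (1/3 : ℝ)) := by
          rw [Finset.sum_congr rfl (fun v _ => hball v), Finset.sum_const, nsmul_eq_mul]
      _ = volume (⋃ v ∈ S, ball (v : EuclideanSpace ℝ (Fin d)) (1/3 : ℝ)) := hsum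
      _ ≤ volume (ball (0 : EuclideanSpace ℝ (Fin d)) (4/3 : ℝ)) := measure_mono hsub
      _ = _ := hbig
  rw [← mul_assoc] at key
  have key2 : (S.card : ℝ≥0∞) * ENNReal.ofReal ((1/3 : ℝ) ^ d) ≤
      ENNReal.ofReal ((4/3 : ℝ) ^ d) :=
    (ENNReal.mul_le_mul_iff_left hV0.ne' hVtop).mp key
  -- convert to real
  have h13 : (0:ℝ) ≤ (1/3 : ℝ) ^ d := by positivity
  rw [← ENNReal.ofReal_natCast, ← ENNReal.ofReal_mul (by positivity)] at key2
  have hr : (S.card : ℝ) * (1/3 : ℝ) ^ d ≤ (4/3 : ℝ) ^ d :=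
    (ENNReal.ofReal_le_ofReal_iff (by positivity)).mp key2
  have : (S.card : ℝ) ≤ 4 ^ d := by
    have h3 : (0:ℝ) < (1/3 : ℝ) ^ d := by positivity
    rw [← le_div_iff₀ h3] at hr
    calc (S.card : ℝ) ≤ (4/3 : ℝ) ^ d / (1/3 : ℝ) ^ d := hr
      _ = 4 ^ d := by rw [← div_pow]; norm_num
  exact_mod_cast this

lemma exists_net (d : ℕ) : ∃ S : Finset (EuclideanSpace ℝ (Fin d)),
    (∀ v ∈ S, ‖v‖ = 1) ∧ S.card ≤ 4 ^ d ∧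
    ∀ u : EuclideanSpace ℝ (Fin d), ‖u‖ = 1 → ∃ v ∈ S, dist u v ≤ 2/3 := by
  set P : Set (EuclideanSpace ℝ (Fin d)) → Prop := fun A =>
    (∀ v ∈ A, ‖v‖ = 1) ∧ ∀ v ∈ A, ∀ w ∈ A, v ≠ w → 2/3 < dist v w with hP
  obtain ⟨M, hM⟩ : ∃ M, Maximal (· ∈ {A | P A}) M := by
    apply zorn_subset
    intro c hc hchain
    refine ⟨⋃₀ c, ⟨?_, ?_⟩, fun s hs => Set.subset_sUnion_of_mem hs⟩
    · rintro v ⟨A, hA, hv⟩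
      exact (hc hA).1 v hv
    · rintro v ⟨A, hA, hv⟩ w ⟨B, hB, hw⟩ hvw
      rcases hchain.total hA hB with h | h
      · exact (hc hB).2 v (h hv) w hw hvw
      · exact (hc hA).2 v hv w (h hw) hvw
  have hfin : M.Finite := by
    by_contra hinf
    obtain ⟨T, hTsub, hTcard⟩ := Set.Infinite.exists_subset_card_eq hinf (4^d+1)
    have := sep_card_bound d T (fun v hv => hM.1.1 v (hTsub hv))
      (fun v hv w hw hvw => hM.1.2 v (hTsub hv) w (hTsub hw) hvw)
    omega
  refine ⟨hfin.toFinset, fun v hv => hM.1.1 v (hfin.mem_toFinset.mp hv), ?_, ?_⟩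
  · have := sep_card_bound d hfin.toFinset (fun v hv => hM.1.1 v (hfin.mem_toFinset.mp hv))
      (fun v hv w hw hvw => hM.1.2 v (hfin.mem_toFinset.mp hv) w (hfin.mem_toFinset.mp hw) hvw)
    exact this
  · intro u hu
    by_contra hcon
    push_neg at hcon
    have hu_notM : u ∉ M := fun h => by
      have := hcon u (hfin.mem_toFinset.mpr h); rw [dist_self] at this; linarith
    have : P (insert u M) := by
      constructor
      · rintro v (rfl | hv)
        · exact hu
        · exact hM.1.1 v hv
      · rintro v (rfl | hv) w (rfl | hw) hvw
        · exact absurd rfl hvw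
        · exact hcon w (hfin.mem_toFinset.mpr hw)
        · rw [dist_comm]; exact hcon v (hfin.mem_toFinset.mpr hv)
        · exact hM.1.2 v hv w hw hvw
    have := hM.2 this (Set.subset_insert u M)
    exact hu_notM (this (Set.mem_insert u M))

/-- If a zero-mean random vector `X` in `ℝ^d` is `(σ/√d)`-subGaussian, i.e.
`E exp(⟨v, X⟩) ≤ exp(‖v‖² σ²/(2d))` for all `v ∈ ℝ^d`, then for every `t ≥ 0`,
`Pr(‖X‖ ≥ t) ≤ 4^d · exp(−d t²/(8σ²))`. -/
theorem subGaussian_norm_tail_with_covering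
    (d : ℕ) (Ω : Type) [MeasureSpace Ω] [IsProbabilityMeasure (ℙ : Measure Ω)]
    (X : Ω → EuclideanSpace ℝ (Fin d)) (σ : ℝ) (hσ : 0 < σ)
    (hXmeas : Measurable X) (hXint : Integrable X)
    (hmean : (∫ ω, X ω) = 0)
    (hmgf_int : ∀ v : EuclideanSpace ℝ (Fin d), Integrable (fun ω => Real.exp ⟪v, X ω⟫))
    (hmgf : ∀ v : EuclideanSpace ℝ (Fin d),
      (∫ ω, Real.exp ⟪v, X ω⟫) ≤ Real.exp (‖v‖ ^ 2 * σ ^ 2 / (2 * d))) :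
    ∀ t : ℝ, 0 ≤ t →
      ℙ {ω | t ≤ ‖X ω‖} ≤
        ENNReal.ofReal ((4 : ℝ) ^ d * Real.exp (-(d * t ^ 2) / (8 * σ ^ 2))) := by
  intro t ht
  rcases ht.eq_or_lt with rfl | htpos
  · -- t = 0 case: probability ≤ 1 ≤ RHS
    calc ℙ {ω | (0:ℝ) ≤ ‖X ω‖} ≤ 1 := prob_le_one
      _ ≤ ENNReal.ofReal ((4 : ℝ) ^ d * Real.exp (-(d * 0 ^ 2) / (8 * σ ^ 2))) := by
        rw [show ((0:ℝ)^2 : ℝ) = 0 by ring]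
        simp only [mul_zero, neg_zero, zero_div, Real.exp_zero, mul_one]
        rw [show (1 : ℝ≥0∞) = ENNReal.ofReal 1 by simp]
        exact ENNReal.ofReal_le_ofReal (one_le_pow₀ (by norm_num))
  -- t > 0
  obtain ⟨S, hSnorm, hScard, hSnet⟩ := exists_net d
  -- d must be positive if the event is nonempty; handle via inclusion
  -- Chernoff for each v in S at level s = 7t/9
  set s : ℝ := 7 * t / 9 with hs
  have hspos : 0 < s := by positivity
  -- inclusion
  have hincl : {ω | t ≤ ‖X ω‖} ⊆ ⋃ v ∈ S, {ω | s ≤ ⟪v, X ω⟫} := by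
    intro ω hω
    simp only [Set.mem_setOf_eq] at hω
    have hXne : X ω ≠ 0 := by
      intro h; rw [h, norm_zero] at hω; linarith
    have hXnorm : 0 < ‖X ω‖ := norm_pos_iff.mpr hXne
    set u : EuclideanSpace ℝ (Fin d) := ‖X ω‖⁻¹ • X ω with hu
    have hunorm : ‖u‖ = 1 := by
      rw [hu, norm_smul, norm_inv, norm_norm, inv_mul_cancel₀ hXnorm.ne']
    obtain ⟨v, hvS, hvd⟩ := hSnet u hunorm
    refine Set.mem_biUnion hvS ?_
    simp only [Set.mem_setOf_eq]
    -- ⟪v, u⟫ ≥ 1 - (2/3)^2/2 = 7/9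
    have hvnorm : ‖v‖ = 1 := hSnorm v hvS
    have hd2 : dist u v ^ 2 ≤ (2/3) ^ 2 := by
      have := dist_nonneg (x := u) (y := v)
      nlinarith
    have hinner : (7:ℝ)/9 ≤ ⟪v, u⟫ := by
      have : dist u v ^ 2 = ‖u‖^2 - 2 * ⟪v, u⟫ + ‖v‖^2 := by
        rw [dist_eq_norm, ← real_inner_self_eq_norm_sq, ← real_inner_self_eq_norm_sq,
          ← real_inner_self_eq_norm_sq, inner_sub_sub_self]
        rw [real_inner_comm u v]; ring
      rw [hunorm, hvnorm] at this
      nlinarith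
    have : ⟪v, X ω⟫ = ‖X ω‖ * ⟪v, u⟫ := by
      rw [hu, real_inner_smul_right]
      field_simp
    rw [this]
    calc s = 7 * t / 9 := hs
      _ ≤ 7 * ‖X ω‖ / 9 := by linarith
      _ = ‖X ω‖ * (7/9) := by ring
      _ ≤ ‖X ω‖ * ⟪v, u⟫ := by
        exact mul_le_mul_of_nonneg_left hinner hXnorm.le
  -- Chernoff bound per direction
  have hchern : ∀ v ∈ S, ℙ {ω | s ≤ ⟪v, X ω⟫} ≤
      ENNReal.ofReal (Real.exp (-(s ^ 2 * d) / (2 * σ ^ 2))) := by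
    intro v hvS
    have hvnorm : ‖v‖ = 1 := hSnorm v hvS
    rcases Nat.eq_zero_or_pos d with hd0 | hdpos
    · exfalso
      -- in dimension 0, no unit vectors
      have : v = 0 := by
        subst hd0
        exact Subsingleton.elim v 0
      rw [this, norm_zero] at hvnorm; norm_num at hvnorm
    set lam : ℝ := s * d / σ ^ 2 with hlam
    have hlampos : 0 < lam := by positivity
    have hint : Integrable (fun ω => Real.exp (lam * ⟪v, X ω⟫)) ℙ := by
      have h := hmgf_int (lam • v)
      have he : (fun ω => Real.exp ⟪lam • v, X ω⟫) = fun ω => Real.exp (lam * ⟪v, X ω⟫) := by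
        funext ω; rw [real_inner_smul_left]
      rwa [he] at h
    have hk := measure_ge_le_exp_mul_mgf (μ := ℙ) (X := fun ω => ⟪v, X ω⟫) s hlampos.le hint
    have hmgfle : mgf (fun ω => ⟪v, X ω⟫) ℙ lam ≤ Real.exp (lam ^ 2 * σ ^ 2 / (2 * d)) := by
      have := hmgf (lam • v)
      rw [norm_smul, mul_pow] at this
      simp only [hvnorm, one_pow, mul_one, norm_eq_abs, sq_abs] at this
      calc mgf (fun ω => ⟪v, X ω⟫) ℙ lam = ∫ ω, Real.exp ⟪lam • v, X ω⟫ := by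
            unfold mgf; congr 1; ext ω; rw [real_inner_smul_left]
        _ ≤ _ := this
    have hbound : (ℙ {ω | s ≤ ⟪v, X ω⟫}).toReal ≤ Real.exp (-(s ^ 2 * d) / (2 * σ ^ 2)) := by
      calc (ℙ {ω | s ≤ ⟪v, X ω⟫}).toReal ≤ Real.exp (-lam * s) * mgf (fun ω => ⟪v, X ω⟫) ℙ lam := hk
        _ ≤ Real.exp (-lam * s) * Real.exp (lam ^ 2 * σ ^ 2 / (2 * d)) := by
            exact mul_le_mul_of_nonneg_left hmgfle (Real.exp_pos _).le
        _ = Real.exp (-lam * s + lam ^ 2 * σ ^ 2 / (2 * d)) := (Real.exp_add _ _).symm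
        _ = Real.exp (-(s ^ 2 * d) / (2 * σ ^ 2)) := by
            congr 1
            rw [hlam]
            have hdR : (0:ℝ) < (d:ℝ) := by exact_mod_cast hdpos
            field_simp
            ring
    rw [← ENNReal.ofReal_toReal (measure_ne_top ℙ _)]
    exact ENNReal.ofReal_le_ofReal hbound
  -- union bound
  calc ℙ {ω | t ≤ ‖X ω‖} ≤ ℙ (⋃ v ∈ S, {ω | s ≤ ⟪v, X ω⟫}) := measure_mono hincl
    _ ≤ ∑ v ∈ S, ℙ {ω | s ≤ ⟪v, X ω⟫} := measure_biUnion_finset_le S _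
    _ ≤ ∑ v ∈ S, ENNReal.ofReal (Real.exp (-(s ^ 2 * d) / (2 * σ ^ 2))) :=
        Finset.sum_le_sum hchern
    _ = S.card * ENNReal.ofReal (Real.exp (-(s ^ 2 * d) / (2 * σ ^ 2))) := by
        rw [Finset.sum_const, nsmul_eq_mul]
    _ ≤ (4:ℝ≥0∞) ^ d * ENNReal.ofReal (Real.exp (-(s ^ 2 * d) / (2 * σ ^ 2))) := by
        gcongr
        exact_mod_cast le_trans (Nat.cast_le.mpr hScard) (by norm_cast)
    _ ≤ ENNReal.ofReal ((4 : ℝ) ^ d * Real.exp (-(d * t ^ 2) / (8 * σ ^ 2))) := by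
        rw [show ((4:ℝ≥0∞) ^ d) = ENNReal.ofReal ((4:ℝ)^d) by
          rw [ENNReal.ofReal_pow (by norm_num)]; norm_num]
        rw [← ENNReal.ofReal_mul (by positivity)]
        apply ENNReal.ofReal_le_ofReal
        apply mul_le_mul_of_nonneg_left _ (by positivity)
        apply Real.exp_le_exp.mpr
        rw [hs]
        rw [div_le_div_iff₀ (by positivity) (by positivity)]
        have hd0 : (0:ℝ) ≤ (d:ℝ) := Nat.cast_nonneg d
        nlinarith [sq_nonneg t, mul_nonneg hd0 (sq_nonneg t), sq_nonneg σ]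
end

section
/- For real symmetric matrices A, B, C of the same size, if A ⪯ B (i.e. B − A is positive semidefinite), then tr(exp(C + A)) ≤ tr(exp(C + B)), where exp denotes the matrix exponential and tr the trace. -/
open NormedSpace Matrix

namespace TraceExpAux

attribute [local instance] Matrix.linftyOpNormedRing Matrix.linftyOpNormedAlgebra
  Matrix.linftyOpNormedSpace

variable {d : ℕ}

local notation "Mat" => Matrix (Fin d) (Fin d) ℝ

lemma trace_nonneg_of_psd {P : Mat} (hP : P.PosSemidef) : 0 ≤ P.trace := by
  rw [Matrix.trace]
  refine Finset.sum_nonneg fun i _ => ?_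
  have := hP.2 (Finsupp.single i 1)
  simpa [dotProduct, Matrix.mulVec, Pi.single_apply, Matrix.diag] using this

lemma trace_mul_nonneg {P Q : Mat} (hP : P.PosSemidef) (hQ : Q.PosSemidef) :
    0 ≤ (P * Q).trace := by
  obtain ⟨S, hS, hSQ⟩ : ∃ S : Mat, Sᴴ = S ∧ S * S = Q :=
    by
      classical
      open MatrixOrder in
      obtain ⟨X, hX, -, hXX⟩ := CFC.exists_sqrt_of_isSelfAdjoint_of_quasispectrumRestricts
        hQ.isHermitian (QuasispectrumRestricts.nnreal_of_nonneg hQ.nonneg)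
      exact ⟨X, hX.star_eq, hXX⟩
  have h2 : (P * Q).trace = (Sᴴ * P * S).trace := by
    rw [hS, ← hSQ, ← Matrix.mul_assoc, Matrix.trace_mul_cycle]
  rw [h2]
  exact trace_nonneg_of_psd (hP.conjTranspose_mul_mul_same S)

lemma exp_psd {X : Mat} (hX : X.IsHermitian) : (exp X).PosSemidef := by
  have h2 : ((1/2 : ℝ) • X).IsHermitian := by
    unfold Matrix.IsHermitian
    rw [Matrix.conjTranspose_smul, hX.eq, star_trivial]
  have hsplit : exp X = (exp ((1/2 : ℝ) • X))ᴴ * exp ((1/2 : ℝ) • X) := by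
    have heq : (1/2 : ℝ) • X + (1/2 : ℝ) • X = X := by module
    rw [← Matrix.exp_conjTranspose, h2.eq,
      ← Matrix.exp_add_of_commute _ _ (Commute.refl _), heq]
  rw [hsplit]
  exact Matrix.posSemidef_conjTranspose_mul_self _

noncomputable def traceCLM (d : ℕ) : Matrix (Fin d) (Fin d) ℝ →L[ℝ] ℝ :=
  LinearMap.toContinuousLinearMap (Matrix.traceLinearMap (Fin d) ℝ ℝ)

@[simp] lemma traceCLM_apply (X : Mat) : traceCLM d X = X.trace := rfl

noncomputable def traceMulCLM (D : Mat) : Mat →L[ℝ] ℝ :=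
  LinearMap.toContinuousLinearMap
    ((Matrix.traceLinearMap (Fin d) ℝ ℝ).comp (LinearMap.mulRight ℝ D))

@[simp] lemma traceMulCLM_apply (D X : Mat) : traceMulCLM D X = (X * D).trace := rfl

lemma entry_abs_le (A : Mat) (i : Fin d) : |A i i| ≤ ‖A‖ := by
  rw [← Real.norm_eq_abs, ← coe_nnnorm, ← coe_nnnorm A, NNReal.coe_le_coe]
  calc ‖A i i‖₊ ≤ ∑ j, ‖A i j‖₊ :=
        Finset.single_le_sum (f := fun j => ‖A i j‖₊) (fun _ _ => zero_le') (Finset.mem_univ i)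
    _ ≤ ‖A‖₊ := by
        rw [Matrix.linfty_opNNNorm_def]
        exact Finset.le_sup (f := fun i => ∑ j, ‖A i j‖₊) (Finset.mem_univ i)

lemma abs_trace_le (A : Mat) : |A.trace| ≤ d * ‖A‖ := by
  calc |A.trace| ≤ ∑ i, |A i i| := Finset.abs_sum_le_sum_abs _ _
    _ ≤ ∑ _i : Fin d, ‖A‖ := Finset.sum_le_sum fun i _ => entry_abs_le A i
    _ = d * ‖A‖ := by simp [Finset.sum_const]

lemma hasDerivAt_line_pow (M D : Mat) (n : ℕ) (t : ℝ) :
    HasDerivAt (fun s : ℝ => (M + s • D) ^ n)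
      (∑ k ∈ Finset.range n, (M + t • D) ^ k * D * (M + t • D) ^ (n - 1 - k)) t := by
  induction n with
  | zero =>
    simp only [pow_zero, Finset.range_zero, Finset.sum_empty]
    exact hasDerivAt_const t (1 : Mat)
  | succ n ih =>
    have hline : HasDerivAt (fun s : ℝ => M + s • D) D t := by
      refine (((hasDerivAt_id t).smul_const D).const_add M).congr_deriv ?_
      simp
    have h := ih.mul hline
    simp only [pow_succ]
    refine h.congr_deriv (Eq.symm ?_)
    set X := M + t • D with hX
    rw [Finset.sum_range_succ, Finset.sum_mul]
    congr 1
    · refine Finset.sum_congr rfl fun k hk => ?_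
      rw [Finset.mem_range] at hk
      have hpow : X ^ (n - 1 - k) * X = X ^ (n + 1 - 1 - k) := by
        rw [← pow_succ]
        congr 1
        omega
      conv_rhs => rw [mul_assoc (X ^ k * D), hpow]
    · have h0 : n + 1 - 1 - n = 0 := by omega
      rw [h0, pow_zero, mul_one]

lemma trace_sum_eq (X D : Mat) (n : ℕ) :
    (∑ k ∈ Finset.range n, X ^ k * D * X ^ (n - 1 - k)).trace
      = n * (X ^ (n - 1) * D).trace := by
  rw [Matrix.trace_sum]
  rw [Finset.sum_congr rfl (fun k hk => ?_), Finset.sum_const, Finset.card_range,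
    nsmul_eq_mul]
  rw [Finset.mem_range] at hk
  rw [Matrix.trace_mul_cycle, ← pow_add]
  congr 3
  omega

lemma trace_exp_eq_tsum (X : Mat) :
    (exp X).trace = ∑' (n : ℕ), ((n.factorial : ℝ)⁻¹ * (X ^ n).trace) := by
  have hsum : Summable fun n : ℕ => (n.factorial : ℝ)⁻¹ • X ^ n := expSeries_summable' X
  rw [exp_eq_tsum ℝ]
  have := ((traceCLM d).map_tsum hsum).symm
  simpa [Matrix.trace_smul, smul_eq_mul] using this.symm

lemma trace_exp_mul_eq_tsum (X D : Mat) :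
    (exp X * D).trace = ∑' (n : ℕ), ((n.factorial : ℝ)⁻¹ * (X ^ n * D).trace) := by
  have hsum : Summable fun n : ℕ => (n.factorial : ℝ)⁻¹ • X ^ n := expSeries_summable' X
  rw [exp_eq_tsum ℝ]
  have := ((traceMulCLM D).map_tsum hsum).symm
  simpa [Matrix.smul_mul, Matrix.trace_smul, smul_eq_mul] using this.symm


lemma norm_pow_le_of_pos [Nonempty (Fin d)] (X : Mat) (k : ℕ) : ‖X ^ k‖ ≤ ‖X‖ ^ k := by
  cases k with
  | zero => simp
  | succ m => exact norm_pow_le' X m.succ_pos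

lemma hasDerivAt_trace_exp (M D : Mat) (t₀ : ℝ) :
    HasDerivAt (fun t : ℝ => (exp (M + t • D)).trace)
      ((exp (M + t₀ • D) * D).trace) t₀ := by
  rcases Nat.eq_zero_or_pos d with hd | hd
  · haveI : IsEmpty (Fin d) := hd ▸ inferInstanceAs (IsEmpty (Fin 0))
    have h0 : ∀ Y : Mat, Y.trace = 0 := fun Y => by simp [Matrix.trace]
    simp only [h0]
    exact hasDerivAt_const t₀ (0:ℝ)
  haveI : Nonempty (Fin d) := ⟨⟨0, hd⟩⟩
  set R : ℝ := ‖M‖ + (|t₀| + 1) * ‖D‖ with hR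
  have hR0 : 0 ≤ R := by positivity
  set u : ℕ → ℝ := fun n => (d * ‖D‖) * ((n : ℝ) * (n.factorial : ℝ)⁻¹ * R ^ (n - 1))
    with hu_def
  have hu : Summable u := by
    apply Summable.mul_left
    rw [← summable_nat_add_iff 1]
    have : (fun n : ℕ => ((n + 1 : ℕ) : ℝ) * (((n + 1 : ℕ).factorial : ℝ))⁻¹ * R ^ (n + 1 - 1))
        = fun n : ℕ => R ^ n / (n.factorial : ℝ) := by
      funext n
      have h1 : ((n + 1).factorial : ℝ) = ((n + 1 : ℕ) : ℝ) * (n.factorial : ℝ) := by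
        rw [Nat.factorial_succ]; push_cast; ring
      have h2 : ((n + 1 : ℕ) : ℝ) ≠ 0 := by positivity
      have h3 : (n.factorial : ℝ) ≠ 0 := Nat.cast_ne_zero.mpr n.factorial_ne_zero
      rw [h1, Nat.add_sub_cancel]
      field_simp
    rw [this]
    exact Real.summable_pow_div_factorial R
  set g : ℕ → ℝ → ℝ := fun n t => (n.factorial : ℝ)⁻¹ * ((M + t • D) ^ n).trace with hg_def
  set g' : ℕ → ℝ → ℝ :=
    fun n t => (n.factorial : ℝ)⁻¹ * ((n : ℝ) * ((M + t • D) ^ (n - 1) * D).trace) with hg'_def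
  have hg : ∀ (n : ℕ) (y : ℝ), HasDerivAt (g n) (g' n y) y := by
    intro n y
    have hmat := hasDerivAt_line_pow M D n y
    have htr := (traceCLM d).hasFDerivAt.comp_hasDerivAt y hmat
    have htr' : HasDerivAt (fun s : ℝ => ((M + s • D) ^ n).trace)
        ((n : ℝ) * ((M + y • D) ^ (n - 1) * D).trace) y := by
      refine htr.congr_deriv (Eq.symm ?_)
      exact (trace_sum_eq _ _ _).symm
    simpa [hg_def, hg'_def] using htr'.const_mul ((n.factorial : ℝ)⁻¹)
  have hbound : ∀ (n : ℕ) (y : ℝ), y ∈ Set.Ioo (t₀ - 1) (t₀ + 1) → ‖g' n y‖ ≤ u n := by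
    intro n y hy
    have hXR : ‖M + y • D‖ ≤ R := by
      calc ‖M + y • D‖ ≤ ‖M‖ + ‖y • D‖ := norm_add_le _ _
        _ = ‖M‖ + |y| * ‖D‖ := by rw [norm_smul, Real.norm_eq_abs]
        _ ≤ R := by
            rw [hR]
            have : |y| ≤ |t₀| + 1 := by
              obtain ⟨h1, h2⟩ := hy
              have h3 := neg_abs_le t₀
              have h4 := le_abs_self t₀
              rw [abs_le]
              constructor <;> linarith
            nlinarith [norm_nonneg D]
    have htrb : |((M + y • D) ^ (n - 1) * D).trace| ≤ d * (R ^ (n - 1) * ‖D‖) := by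
      calc |((M + y • D) ^ (n - 1) * D).trace| ≤ d * ‖(M + y • D) ^ (n - 1) * D‖ :=
            abs_trace_le _
        _ ≤ d * (R ^ (n - 1) * ‖D‖) := by
            apply mul_le_mul_of_nonneg_left _ (by positivity)
            calc ‖(M + y • D) ^ (n - 1) * D‖ ≤ ‖(M + y • D) ^ (n - 1)‖ * ‖D‖ :=
                  norm_mul_le _ _
              _ ≤ R ^ (n - 1) * ‖D‖ := by
                  apply mul_le_mul_of_nonneg_right _ (norm_nonneg D)
                  calc ‖(M + y • D) ^ (n - 1)‖ ≤ ‖M + y • D‖ ^ (n - 1) :=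
                        norm_pow_le_of_pos _ _
                    _ ≤ R ^ (n - 1) := pow_le_pow_left₀ (norm_nonneg _) hXR _
    have hfac : (0 : ℝ) < (n.factorial : ℝ) := by positivity
    rw [hg'_def]
    simp only [Real.norm_eq_abs]
    rw [abs_mul, abs_mul, abs_of_nonneg (by positivity : (0:ℝ) ≤ (n.factorial : ℝ)⁻¹),
      abs_of_nonneg (Nat.cast_nonneg n : (0:ℝ) ≤ (n:ℝ))]
    rw [hu_def]
    have := mul_le_mul_of_nonneg_left htrb (Nat.cast_nonneg n : (0:ℝ) ≤ (n:ℝ))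
    calc (n.factorial : ℝ)⁻¹ * ((n : ℝ) * |((M + y • D) ^ (n - 1) * D).trace|)
        ≤ (n.factorial : ℝ)⁻¹ * ((n : ℝ) * (d * (R ^ (n - 1) * ‖D‖))) := by
          apply mul_le_mul_of_nonneg_left this (by positivity)
      _ = d * ‖D‖ * ((n : ℝ) * (n.factorial : ℝ)⁻¹ * R ^ (n - 1)) := by ring
  have hg0 : Summable fun n => g n t₀ := by
    have hsum : Summable fun n : ℕ => (n.factorial : ℝ)⁻¹ • (M + t₀ • D) ^ n :=
      expSeries_summable' _
    have := hsum.map (traceCLM d).toLinearMap.toAddMonoidHom (traceCLM d).continuous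
    refine this.congr fun n => ?_
    simp [hg_def, Matrix.trace_smul, smul_eq_mul]
  have hmem : t₀ ∈ Set.Ioo (t₀ - 1) (t₀ + 1) := by constructor <;> linarith
  have hderiv : HasDerivAt (fun z => ∑' (n : ℕ), g n z) (∑' (n : ℕ), g' n t₀) t₀ :=
    hasDerivAt_tsum_of_isPreconnected hu isOpen_Ioo (convex_Ioo _ _).isPreconnected
      (fun n y _ => hg n y) hbound hmem hg0 hmem
  have hfun : (fun z => ∑' (n : ℕ), g n z) = fun t : ℝ => (exp (M + t • D)).trace := by
    funext z
    rw [trace_exp_eq_tsum]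
  have hsum' : Summable fun n => g' n t₀ :=
    Summable.of_norm_bounded hu fun n => hbound n t₀ hmem
  have hval : (∑' (n : ℕ), g' n t₀) = (exp (M + t₀ • D) * D).trace := by
    rw [hsum'.tsum_eq_zero_add]
    have h0 : g' 0 t₀ = 0 := by simp [hg'_def]
    rw [h0, zero_add, trace_exp_mul_eq_tsum]
    congr 1
    funext n
    have h1 : ((n + 1).factorial : ℝ) = ((n + 1 : ℕ) : ℝ) * (n.factorial : ℝ) := by
      rw [Nat.factorial_succ]; push_cast; ring
    have h2 : ((n + 1 : ℕ) : ℝ) ≠ 0 := by positivity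
    have h3 : (n.factorial : ℝ) ≠ 0 := Nat.cast_ne_zero.mpr n.factorial_ne_zero
    show (((n+1).factorial : ℝ))⁻¹ * (((n+1:ℕ) : ℝ) * ((M + t₀ • D) ^ (n + 1 - 1) * D).trace)
        = (n.factorial : ℝ)⁻¹ * ((M + t₀ • D) ^ n * D).trace
    rw [Nat.add_sub_cancel, h1]
    push_cast
    field_simp
  rw [hfun, hval] at hderiv
  exact hderiv

end TraceExpAux

/-- For real symmetric matrices `A, B, C` of the same size, if `A ⪯ B`
(i.e. `B − A` is positive semidefinite), then `tr(exp(C + A)) ≤ tr(exp(C + B))`,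
where `exp` is the matrix exponential and `tr` the trace. -/
theorem trace_exp_monotone
    (d : ℕ) (A B C : Matrix (Fin d) (Fin d) ℝ)
    (hA : A.IsHermitian) (hB : B.IsHermitian) (hC : C.IsHermitian)
    (hAB : (B - A).PosSemidef) :
    (NormedSpace.exp (C + A)).trace ≤ (NormedSpace.exp (C + B)).trace := by
  set M := C + A with hM
  set D := B - A with hDdef
  have hherm : ∀ t : ℝ, (M + t • D).IsHermitian := by
    intro t
    have h1 : M.IsHermitian := hC.add hA
    have h2 : (t • D).IsHermitian := by
      unfold Matrix.IsHermitian
      rw [Matrix.conjTranspose_smul, hAB.isHermitian.eq, star_trivial]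
    exact h1.add h2
  have key : ∀ t : ℝ, HasDerivAt (fun t : ℝ => (NormedSpace.exp (M + t • D)).trace)
      ((NormedSpace.exp (M + t • D) * D).trace) t :=
    fun t => TraceExpAux.hasDerivAt_trace_exp M D t
  have hmono : Monotone (fun t : ℝ => (NormedSpace.exp (M + t • D)).trace) := by
    apply monotone_of_deriv_nonneg
    · exact fun t => (key t).differentiableAt
    · intro t
      rw [(key t).deriv]
      exact TraceExpAux.trace_mul_nonneg (TraceExpAux.exp_psd (hherm t)) hAB
  have h01 := hmono (zero_le_one (α := ℝ))
  have e0 : M + (0 : ℝ) • D = C + A := by rw [hM]; simp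
  have e1 : M + (1 : ℝ) • D = C + B := by
    rw [hM, hDdef, one_smul]
    abel
  simp only [e0, e1] at h01
  exact h01
end
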